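/- Let f : ℝ → ℝ be (2m+2)-times continuously differentiable on an interval containing [a - h/2, a + h/2] with h > 0. Define f̄(a) = (1/h)·∫_{a-h/2}^{a+h/2} f(x) dx. Then f̄(a) = ∑_{t=0}^{m} h^{2t}/((2t+1)!·2^{2t}) · f^{(2t)}(a) + R, where |R| ≤ h^{2m+2}/((2m+3)!·2^{2m+2}) · sup of |f^{(2m+2)}| on [a-h/2, a+h/2]. -/

import Mathlib

open intervalIntegral

private lemma iterDW_subset {f : ℝ → ℝ} {s t : Set ℝ} (hst : s ⊆ t)
    (hs : UniqueDiffOn ℝ s) (ht : UniqueDiffOn ℝ t) {N : ℕ}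
    (hf : ContDiffOn ℝ N f t) :
    ∀ n : ℕ, n ≤ N → ∀ x ∈ s,
      iteratedDerivWithin n f s x = iteratedDerivWithin n f t x := by
  intro n
  induction n with
  | zero => intro _ x hx; simp
  | succ k ih =>
    intro hn x hx
    have hk : k ≤ N := le_of_lt (Nat.lt_of_succ_le hn)
    have hEq : Set.EqOn (iteratedDerivWithin k f s) (iteratedDerivWithin k f t) s :=
      fun y hy => ih hk y hy
    rw [iteratedDerivWithin_succ, iteratedDerivWithin_succ,
      derivWithin_congr hEq (hEq hx)]
    exact derivWithin_subset hst (hs x hx)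
      ((hf.differentiableOn_iteratedDerivWithin
        (by exact_mod_cast Nat.lt_of_succ_le hn) ht) x (hst hx))

private lemma iterDW_reflect {f : ℝ → ℝ} {c d : ℝ} (hcd : c < d) {N : ℕ}
    (hf : ContDiffOn ℝ N f (Set.Icc c d)) :
    ∀ n : ℕ, n ≤ N → ∀ x ∈ Set.Icc c d,
      iteratedDerivWithin n (fun y => f (c + d - y)) (Set.Icc c d) x
        = (-1 : ℝ) ^ n * iteratedDerivWithin n f (Set.Icc c d) (c + d - x) := by
  have hud := uniqueDiffOn_Icc hcd
  have hmaps : ∀ y ∈ Set.Icc c d, c + d - y ∈ Set.Icc c d := by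
    intro y hy
    obtain ⟨h1, h2⟩ := hy
    constructor <;> linarith
  intro n
  induction n with
  | zero => intro _ x hx; simp
  | succ k ih =>
    intro hn x hx
    have hk : k ≤ N := le_of_lt (Nat.lt_of_succ_le hn)
    have hEq : Set.EqOn (iteratedDerivWithin k (fun y => f (c + d - y)) (Set.Icc c d))
        (fun y => (-1 : ℝ) ^ k * iteratedDerivWithin k f (Set.Icc c d) (c + d - y))
        (Set.Icc c d) := fun y hy => ih hk y hy
    rw [iteratedDerivWithin_succ, derivWithin_congr hEq (hEq hx)]
    have hdiff : DifferentiableWithinAt ℝ (iteratedDerivWithin k f (Set.Icc c d))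
        (Set.Icc c d) (c + d - x) :=
      hf.differentiableOn_iteratedDerivWithin
        (by exact_mod_cast Nat.lt_of_succ_le hn) hud _ (hmaps x hx)
    have hrefl : HasDerivWithinAt (fun y : ℝ => c + d - y) (-1) (Set.Icc c d) x := by
      simpa using ((hasDerivWithinAt_id x (Set.Icc c d)).const_sub (c + d))
    have hcomp : HasDerivWithinAt
        (fun y => iteratedDerivWithin k f (Set.Icc c d) (c + d - y))
        (derivWithin (iteratedDerivWithin k f (Set.Icc c d)) (Set.Icc c d) (c + d - x) * (-1))
        (Set.Icc c d) x :=
      HasDerivWithinAt.comp x hdiff.hasDerivWithinAt hrefl (fun y hy => hmaps y hy)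
    rw [(hcomp.const_mul ((-1 : ℝ) ^ k)).derivWithin (hud x hx),
      iteratedDerivWithin_succ]
    ring

private lemma taylor_lagrange_left {f : ℝ → ℝ} {x x₀ : ℝ} {n : ℕ} (hx : x < x₀)
    (hf : ContDiffOn ℝ (n + 1) f (Set.Icc x x₀)) :
    ∃ x' ∈ Set.Ioo x x₀, f x - taylorWithinEval f n (Set.Icc x x₀) x₀ x =
      iteratedDerivWithin (n + 1) f (Set.Icc x x₀) x' * (x - x₀) ^ (n + 1) / ((n + 1).factorial : ℝ) := by
  have hmaps : ∀ y ∈ Set.Icc x x₀, x + x₀ - y ∈ Set.Icc x x₀ := by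
    intro y hy
    obtain ⟨h1, h2⟩ := hy
    constructor <;> linarith
  set g : ℝ → ℝ := fun y => f (x + x₀ - y) with hg_def
  have hg : ContDiffOn ℝ (n + 1) g (Set.Icc x x₀) :=
    hf.comp ((contDiff_const.sub contDiff_id).contDiffOn) hmaps
  have hrefl := iterDW_reflect hx (N := n + 1) hf
  have hg' : DifferentiableOn ℝ (iteratedDerivWithin n g (Set.Icc x x₀)) (Set.Ioo x x₀) :=
    (hg.differentiableOn_iteratedDerivWithin (by exact_mod_cast Nat.lt_succ_self n)
      (uniqueDiffOn_Icc hx)).mono Set.Ioo_subset_Icc_self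
  have hTL := taylor_mean_remainder_lagrange (f := g) hx.ne
    (by rw [Set.uIcc_of_le hx.le]; exact hg.of_succ)
    (by rw [Set.uIcc_of_le hx.le, Set.uIoo_of_le hx.le]; exact hg')
  rw [Set.uIcc_of_le hx.le, Set.uIoo_of_le hx.le] at hTL
  obtain ⟨y, hy, hEq⟩ := hTL
  obtain ⟨hy1, hy2⟩ := hy
  refine ⟨x + x₀ - y, ⟨by linarith, by linarith⟩, ?_⟩
  have h1 : g x₀ = f x := by simp [hg_def]
  have h2 : taylorWithinEval g n (Set.Icc x x₀) x x₀
      = taylorWithinEval f n (Set.Icc x x₀) x₀ x := by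
    rw [taylor_within_apply, taylor_within_apply]
    refine Finset.sum_congr rfl fun k hk => ?_
    have hkN : k ≤ n + 1 := le_of_lt (Nat.lt_of_lt_of_le (Finset.mem_range.mp hk)
      (Nat.succ_le_succ (Nat.le_refl n)))
    have hthis := hrefl k hkN x (Set.left_mem_Icc.mpr hx.le)
    rw [← hg_def] at hthis
    rw [hthis, show x + x₀ - x = x₀ by ring, smul_eq_mul, smul_eq_mul,
      show (x - x₀) ^ k = (-1) ^ k * (x₀ - x) ^ k by
        rw [show (x - x₀) = -(x₀ - x) by ring, neg_pow]]
    ring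
  have h3 := hrefl (n + 1) le_rfl y (Set.Ioo_subset_Icc_self ⟨hy1, hy2⟩)
  rw [← hg_def] at h3
  rw [h1, h2, h3] at hEq
  rw [hEq, show (x - x₀) ^ (n + 1) = (-1) ^ (n + 1) * (x₀ - x) ^ (n + 1) by
      rw [show (x - x₀) = -(x₀ - x) by ring, neg_pow]]
  ring

private lemma taylor_two_sided_bound {f : ℝ → ℝ} {l u a x M : ℝ} {n : ℕ} (hlu : l < u)
    (hf : ContDiffOn ℝ (n + 1) f (Set.Icc l u))
    (ha : a ∈ Set.Icc l u) (hx : x ∈ Set.Icc l u)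
    (hM : ∀ y ∈ Set.uIcc a x, |iteratedDerivWithin (n + 1) f (Set.Icc l u) y| ≤ M)
    (hM0 : 0 ≤ M) :
    |f x - taylorWithinEval f n (Set.Icc l u) a x| ≤ M * |x - a| ^ (n + 1) / ((n + 1).factorial : ℝ) := by
  have hus := uniqueDiffOn_Icc hlu
  rcases lt_trichotomy a x with hax | hax | hax
  · -- a < x : standard Lagrange
    have hsub : Set.Icc a x ⊆ Set.Icc l u := Set.Icc_subset_Icc ha.1 hx.2
    have hfs : ContDiffOn ℝ (n + 1) f (Set.Icc a x) := hf.mono hsub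
    have hf' : DifferentiableOn ℝ (iteratedDerivWithin n f (Set.Icc a x)) (Set.Ioo a x) :=
      (hfs.differentiableOn_iteratedDerivWithin (by exact_mod_cast Nat.lt_succ_self n)
        (uniqueDiffOn_Icc hax)).mono Set.Ioo_subset_Icc_self
    have hTL := taylor_mean_remainder_lagrange hax.ne
      (by rw [Set.uIcc_of_le hax.le]; exact hfs.of_succ)
      (by rw [Set.uIcc_of_le hax.le, Set.uIoo_of_le hax.le]; exact hf')
    rw [Set.uIcc_of_le hax.le, Set.uIoo_of_le hax.le] at hTL
    obtain ⟨x', hx', hEq⟩ := hTL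
    have hT : taylorWithinEval f n (Set.Icc a x) a x = taylorWithinEval f n (Set.Icc l u) a x := by
      rw [taylor_within_apply, taylor_within_apply]
      refine Finset.sum_congr rfl fun k hk => ?_
      rw [iterDW_subset hsub (uniqueDiffOn_Icc hax) hus hf k
        (Nat.le_of_lt_succ (Nat.lt_succ_of_lt (Finset.mem_range.mp hk))) a
        (Set.left_mem_Icc.mpr hax.le)]
    have hD : iteratedDerivWithin (n + 1) f (Set.Icc a x) x'
        = iteratedDerivWithin (n + 1) f (Set.Icc l u) x' :=
      iterDW_subset hsub (uniqueDiffOn_Icc hax) hus hf (n + 1) le_rfl x'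
        (Set.Ioo_subset_Icc_self hx')
    rw [← hT, hEq, hD]
    rw [abs_div, abs_mul, abs_pow, Nat.abs_cast]
    gcongr
    · exact hM x' (by rw [Set.uIcc_of_le hax.le]; exact Set.Ioo_subset_Icc_self hx')
  · -- x = a
    subst hax
    simp only [taylorWithinEval_self, sub_self, abs_zero]
    positivity
  · -- x < a : reflected Lagrange
    have hsub : Set.Icc x a ⊆ Set.Icc l u := Set.Icc_subset_Icc hx.1 ha.2
    have hfs : ContDiffOn ℝ (n + 1) f (Set.Icc x a) := hf.mono hsub
    obtain ⟨x', hx', hEq⟩ := taylor_lagrange_left hax hfs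
    have hT : taylorWithinEval f n (Set.Icc x a) a x = taylorWithinEval f n (Set.Icc l u) a x := by
      rw [taylor_within_apply, taylor_within_apply]
      refine Finset.sum_congr rfl fun k hk => ?_
      rw [iterDW_subset hsub (uniqueDiffOn_Icc hax) hus hf k
        (Nat.le_of_lt_succ (Nat.lt_succ_of_lt (Finset.mem_range.mp hk))) a
        (Set.right_mem_Icc.mpr hax.le)]
    have hD : iteratedDerivWithin (n + 1) f (Set.Icc x a) x'
        = iteratedDerivWithin (n + 1) f (Set.Icc l u) x' :=
      iterDW_subset hsub (uniqueDiffOn_Icc hax) hus hf (n + 1) le_rfl x'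
        (Set.Ioo_subset_Icc_self hx')
    rw [← hT, hEq, hD]
    rw [abs_div, abs_mul, abs_pow, Nat.abs_cast]
    gcongr
    · exact hM x' (by rw [Set.uIcc_of_ge hax.le]; exact Set.Ioo_subset_Icc_self hx')

private lemma sum_range_two_mul (n : ℕ) (g : ℕ → ℝ) :
    ∑ k ∈ Finset.range (2 * n), g k = ∑ t ∈ Finset.range n, (g (2 * t) + g (2 * t + 1)) := by
  induction n with
  | zero => simp
  | succ k ih =>
    rw [Finset.sum_range_succ, ← ih, show 2 * (k + 1) = 2 * k + 1 + 1 by ring,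
      Finset.sum_range_succ, Finset.sum_range_succ]
    ring

theorem stmt3 (m : ℕ) (f : ℝ → ℝ) (a h l u : ℝ) (hh : 0 < h)
    (hsub : Set.Icc (a - h / 2) (a + h / 2) ⊆ Set.Icc l u)
    (hf : ContDiffOn ℝ (2 * m + 2) f (Set.Icc l u)) :
    ∃ R : ℝ,
      (1 / h) * (∫ x in (a - h / 2)..(a + h / 2), f x)
        = (∑ t ∈ Finset.range (m + 1),
            h ^ (2 * t) / ((2 * t + 1).factorial * 2 ^ (2 * t))
              * iteratedDerivWithin (2 * t) f (Set.Icc l u) a) + R ∧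
      |R| ≤ h ^ (2 * m + 2) / ((2 * m + 3).factorial * 2 ^ (2 * m + 2))
              * ⨆ x : Set.Icc (a - h / 2) (a + h / 2),
                  |iteratedDerivWithin (2 * m + 2) f (Set.Icc l u) x| := by
  have hlohi : a - h / 2 < a + h / 2 := by linarith
  have hloa : a - h / 2 ≤ a := by linarith
  have hahi : a ≤ a + h / 2 := by linarith
  have haJ : a ∈ Set.Icc (a - h / 2) (a + h / 2) := ⟨hloa, hahi⟩
  have hlu : l < u :=
    lt_of_le_of_lt (hsub (Set.left_mem_Icc.mpr hlohi.le)).1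
      (lt_of_lt_of_le hlohi (hsub (Set.right_mem_Icc.mpr hlohi.le)).2)
  have hus := uniqueDiffOn_Icc hlu
  have hfN : ContDiffOn ℝ ((2 * m + 2 : ℕ) : WithTop ℕ∞) f (Set.Icc l u) := by
    exact_mod_cast hf
  set M := ⨆ x : Set.Icc (a - h / 2) (a + h / 2),
      |iteratedDerivWithin (2 * m + 2) f (Set.Icc l u) (x : ℝ)| with hM_def
  -- boundedness and basic properties of M
  have hFcont : ContinuousOn (iteratedDerivWithin (2 * m + 2) f (Set.Icc l u)) (Set.Icc l u) :=
    hfN.continuousOn_iteratedDerivWithin le_rfl hus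
  have hbdd : BddAbove (Set.range fun x : Set.Icc (a - h / 2) (a + h / 2) =>
      |iteratedDerivWithin (2 * m + 2) f (Set.Icc l u) (x : ℝ)|) := by
    have hrange : (Set.range fun x : Set.Icc (a - h / 2) (a + h / 2) =>
        |iteratedDerivWithin (2 * m + 2) f (Set.Icc l u) (x : ℝ)|)
        = (fun y => |iteratedDerivWithin (2 * m + 2) f (Set.Icc l u) y|) ''
          (Set.Icc (a - h / 2) (a + h / 2)) := by
      ext r
      constructor
      · rintro ⟨⟨y, hy⟩, rfl⟩; exact ⟨y, hy, rfl⟩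
      · rintro ⟨y, hy, rfl⟩; exact ⟨⟨y, hy⟩, rfl⟩
    rw [hrange]
    exact (isCompact_Icc.image_of_continuousOn ((hFcont.mono hsub).abs)).bddAbove
  have hMle : ∀ y ∈ Set.Icc (a - h / 2) (a + h / 2),
      |iteratedDerivWithin (2 * m + 2) f (Set.Icc l u) y| ≤ M :=
    fun y hy => le_ciSup hbdd ⟨y, hy⟩
  have hM0 : 0 ≤ M := le_trans (abs_nonneg _) (hMle a haJ)
  -- pointwise Taylor bound
  have hkey : ∀ x ∈ Set.Icc (a - h / 2) (a + h / 2),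
      |f x - taylorWithinEval f (2 * m + 1) (Set.Icc l u) a x|
        ≤ M * |x - a| ^ (2 * m + 2) / ((2 * m + 2).factorial : ℝ) := by
    intro x hx
    have hMx : ∀ y ∈ Set.uIcc a x,
        |iteratedDerivWithin (2 * m + 1 + 1) f (Set.Icc l u) y| ≤ M := by
      intro y hy
      have : y ∈ Set.Icc (a - h / 2) (a + h / 2) := Set.uIcc_subset_Icc haJ hx hy
      have h22 : 2 * m + 1 + 1 = 2 * m + 2 := by omega
      rw [h22]
      exact hMle y this
    have hfn : ContDiffOn ℝ ((2 * m + 1 : ℕ) + 1 : ℕ) f (Set.Icc l u) := by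
      have h22 : 2 * m + 1 + 1 = 2 * m + 2 := by omega
      rw [h22]; exact hfN
    have := taylor_two_sided_bound (n := 2 * m + 1) hlu hfn (hsub haJ) (hsub hx) hMx hM0
    have h22 : 2 * m + 1 + 1 = 2 * m + 2 := by omega
    rwa [h22] at this
  -- the Taylor polynomial as an explicit polynomial
  set P : ℝ → ℝ := fun x => ∑ k ∈ Finset.range (2 * m + 2),
      (iteratedDerivWithin k f (Set.Icc l u) a / (k.factorial : ℝ)) * (x - a) ^ k with hP_def
  have hPtaylor : ∀ x : ℝ, taylorWithinEval f (2 * m + 1) (Set.Icc l u) a x = P x := by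
    intro x
    rw [taylor_within_apply, hP_def]
    have h22 : 2 * m + 1 + 1 = 2 * m + 2 := by omega
    rw [h22]
    exact Finset.sum_congr rfl fun k _ => by rw [smul_eq_mul]; ring
  have hPcont : Continuous P := by
    rw [hP_def]
    apply continuous_finset_sum
    intro k _
    fun_prop
  have hfc : ContinuousOn f (Set.Icc (a - h / 2) (a + h / 2)) := hfN.continuousOn.mono hsub
  have hint_f : IntervalIntegrable f MeasureTheory.volume (a - h / 2) (a + h / 2) := by
    apply ContinuousOn.intervalIntegrable
    rwa [Set.uIcc_of_le hlohi.le]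
  have hint_P : IntervalIntegrable P MeasureTheory.volume (a - h / 2) (a + h / 2) :=
    hPcont.intervalIntegrable _ _
  -- basic monomial integral
  have hmono_int : ∀ k : ℕ, ∫ x in (a - h / 2)..(a + h / 2), (x - a) ^ k
      = ((h / 2) ^ (k + 1) - (-(h / 2)) ^ (k + 1)) / ((k : ℝ) + 1) := by
    intro k
    rw [intervalIntegral.integral_comp_sub_right (fun y => y ^ k) a]
    rw [integral_pow]
    rw [show a + h / 2 - a = h / 2 by ring, show a - h / 2 - a = -(h / 2) by ring]
  -- integral of the Taylor polynomial
  have hIP : ∫ x in (a - h / 2)..(a + h / 2), P x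
      = ∑ k ∈ Finset.range (2 * m + 2),
          (iteratedDerivWithin k f (Set.Icc l u) a / (k.factorial : ℝ))
            * (((h / 2) ^ (k + 1) - (-(h / 2)) ^ (k + 1)) / ((k : ℝ) + 1)) := by
    rw [hP_def]
    rw [intervalIntegral.integral_finset_sum (fun k _ => by
      apply Continuous.intervalIntegrable; fun_prop)]
    exact Finset.sum_congr rfl fun k _ => by
      rw [intervalIntegral.integral_const_mul, hmono_int k]
  have hSum : (1 / h) * ∫ x in (a - h / 2)..(a + h / 2), P x
      = ∑ t ∈ Finset.range (m + 1),
          h ^ (2 * t) / ((2 * t + 1).factorial * 2 ^ (2 * t))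
            * iteratedDerivWithin (2 * t) f (Set.Icc l u) a := by
    rw [hIP, Finset.mul_sum, show 2 * m + 2 = 2 * (m + 1) by ring, sum_range_two_mul]
    refine Finset.sum_congr rfl fun t _ => ?_
    have e1 : (-(h / 2) : ℝ) ^ (2 * t + 1 + 1) = (h / 2) ^ (2 * t + 1 + 1) :=
      Even.neg_pow ⟨t + 1, by ring⟩ _
    have e2 : (-(h / 2) : ℝ) ^ (2 * t + 1) = -((h / 2) ^ (2 * t + 1)) :=
      Odd.neg_pow ⟨t, by ring⟩ _
    rw [e1, e2, sub_self, zero_div, mul_zero, mul_zero, add_zero, sub_neg_eq_add]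
    have hfac : ((2 * t + 1).factorial : ℝ) = (2 * t + 1) * ((2 * t).factorial : ℝ) := by
      rw [Nat.factorial_succ]; push_cast; ring
    rw [hfac]
    have hfpos : (0 : ℝ) < ((2 * t).factorial : ℝ) := by positivity
    have h2t1 : (0 : ℝ) < (2 * (t : ℝ) + 1) := by positivity
    rw [div_pow]
    have hfne : ((2 * t).factorial : ℝ) ≠ 0 := by positivity
    have h2t0 : ((2 * t : ℕ) : ℝ) + 1 ≠ 0 := by positivity
    field_simp
    push_cast
    ring
  -- define the remainder
  refine ⟨(1 / h) * (∫ x in (a - h / 2)..(a + h / 2), f x)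
      - ∑ t ∈ Finset.range (m + 1),
          h ^ (2 * t) / ((2 * t + 1).factorial * 2 ^ (2 * t))
            * iteratedDerivWithin (2 * t) f (Set.Icc l u) a, by ring, ?_⟩
  have hR : (1 / h) * (∫ x in (a - h / 2)..(a + h / 2), f x)
      - (∑ t ∈ Finset.range (m + 1),
          h ^ (2 * t) / ((2 * t + 1).factorial * 2 ^ (2 * t))
            * iteratedDerivWithin (2 * t) f (Set.Icc l u) a)
      = (1 / h) * ∫ x in (a - h / 2)..(a + h / 2), (f x - P x) := by
    rw [intervalIntegral.integral_sub hint_f hint_P, ← hSum]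
    ring
  rw [hR]
  have hint_abs : IntervalIntegrable (fun x => |f x - P x|) MeasureTheory.volume
      (a - h / 2) (a + h / 2) := by
    apply ContinuousOn.intervalIntegrable
    rw [Set.uIcc_of_le hlohi.le]
    exact (hfc.sub hPcont.continuousOn).abs
  have hint_bd : IntervalIntegrable
      (fun x => M * (x - a) ^ (2 * m + 2) / ((2 * m + 2).factorial : ℝ))
      MeasureTheory.volume (a - h / 2) (a + h / 2) := by
    apply Continuous.intervalIntegrable; fun_prop
  have habs : |∫ x in (a - h / 2)..(a + h / 2), (f x - P x)|
      ≤ ∫ x in (a - h / 2)..(a + h / 2), |f x - P x| :=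
    intervalIntegral.abs_integral_le_integral_abs hlohi.le
  have hmono2 : ∫ x in (a - h / 2)..(a + h / 2), |f x - P x|
      ≤ ∫ x in (a - h / 2)..(a + h / 2),
          M * (x - a) ^ (2 * m + 2) / ((2 * m + 2).factorial : ℝ) := by
    apply intervalIntegral.integral_mono_on hlohi.le hint_abs hint_bd
    intro x hx
    have hk := hkey x hx
    rw [hPtaylor x] at hk
    have heven : |x - a| ^ (2 * m + 2) = (x - a) ^ (2 * m + 2) :=
      Even.pow_abs ⟨m + 1, by ring⟩ _
    rwa [heven] at hk
  have hIbd : ∫ x in (a - h / 2)..(a + h / 2),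
      M * (x - a) ^ (2 * m + 2) / ((2 * m + 2).factorial : ℝ)
      = (M / ((2 * m + 2).factorial : ℝ))
        * (((h / 2) ^ (2 * m + 2 + 1) - (-(h / 2)) ^ (2 * m + 2 + 1)) / ((2 * m + 2 : ℝ) + 1)) := by
    have hfun : (fun x => M * (x - a) ^ (2 * m + 2) / ((2 * m + 2).factorial : ℝ))
        = fun x => (M / ((2 * m + 2).factorial : ℝ)) * (x - a) ^ (2 * m + 2) :=
      funext fun x => by ring
    rw [hfun, intervalIntegral.integral_const_mul, hmono_int (2 * m + 2)]
    push_cast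
    ring_nf
  have hfinal : (1 / h) * ((M / ((2 * m + 2).factorial : ℝ))
        * (((h / 2) ^ (2 * m + 2 + 1) - (-(h / 2)) ^ (2 * m + 2 + 1)) / ((2 * m + 2 : ℝ) + 1)))
      = h ^ (2 * m + 2) / ((2 * m + 3).factorial * 2 ^ (2 * m + 2)) * M := by
    have e3 : (-(h / 2) : ℝ) ^ (2 * m + 2 + 1) = -((h / 2) ^ (2 * m + 2 + 1)) :=
      Odd.neg_pow ⟨m + 1, by ring⟩ _
    rw [e3, sub_neg_eq_add]
    have hfac : ((2 * m + 3).factorial : ℝ) = (2 * m + 3) * ((2 * m + 2).factorial : ℝ) := by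
      rw [show 2 * m + 3 = (2 * m + 2) + 1 by omega, Nat.factorial_succ]
      push_cast; ring
    rw [hfac, div_pow]
    have hfne : ((2 * m + 2).factorial : ℝ) ≠ 0 := by positivity
    field_simp
    ring
  calc |(1 / h) * ∫ x in (a - h / 2)..(a + h / 2), (f x - P x)|
      = (1 / h) * |∫ x in (a - h / 2)..(a + h / 2), (f x - P x)| := by
        rw [abs_mul, abs_of_pos (by positivity : (0 : ℝ) < 1 / h)]
    _ ≤ (1 / h) * ∫ x in (a - h / 2)..(a + h / 2), |f x - P x| := by
        apply mul_le_mul_of_nonneg_left habs (by positivity)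
    _ ≤ (1 / h) * ∫ x in (a - h / 2)..(a + h / 2),
          M * (x - a) ^ (2 * m + 2) / ((2 * m + 2).factorial : ℝ) := by
        apply mul_le_mul_of_nonneg_left hmono2 (by positivity)
    _ = h ^ (2 * m + 2) / ((2 * m + 3).factorial * 2 ^ (2 * m + 2)) * M := by
        rw [hIbd, hfinal]
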